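/- Let d ≥ 1 and let A ⊆ ℝ^d be locally finite (every bounded subset of ℝ^d contains only finitely many points of A) and coarsely dense (every closed half-space of ℝ^d contains infinitely many points of A), with 0 ∈ A. Then for every integer k ≥ 2, the k-th Brillouin zone Bz_k(0, A) is homotopy equivalent to the sphere S^{d−1}. -/

import Mathlib

open Set Metric MeasureTheory

noncomputable section

/-- The integer lattice `ℤ^d` as a subset of `ℝ^d`. -/
def intLattice (d : ℕ) : Set (EuclideanSpace ℝ (Fin d)) :=
  {x | ∀ i, ∃ n : ℤ, x i = (n : ℝ)}

/-- The canonical embedding of integer vectors into `ℝ^d`. -/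
def toEuc (d : ℕ) (a : Fin d → ℤ) : EuclideanSpace ℝ (Fin d) :=
  WithLp.toLp 2 (fun i => (a i : ℝ))

/-- The `k`-th Brillouin zone of `a` in `A`: points `x` such that at most `k-1` points of
`A \ {a}` are strictly closer to `x` than `a`, and at least `k-1` points of `A \ {a}` are
at distance at most `dist x a` from `x`. -/
def brillouinZone (d k : ℕ) (A : Set (EuclideanSpace ℝ (Fin d)))
    (a : EuclideanSpace ℝ (Fin d)) : Set (EuclideanSpace ℝ (Fin d)) :=
  {x | {p | p ∈ A \ {a} ∧ dist x p < dist x a}.encard ≤ ((k - 1 : ℕ) : ℕ∞) ∧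
       ((k - 1 : ℕ) : ℕ∞) ≤ {p | p ∈ A \ {a} ∧ dist x p ≤ dist x a}.encard}

/-- The set of points with exactly `k-1` points of `A \ {a}` strictly closer than `a` and
no point of `A \ {a}` at exactly distance `dist x a`; its connected components are the
chambers of the `k`-th Brillouin zone. -/
def chamberRegion (d k : ℕ) (A : Set (EuclideanSpace ℝ (Fin d)))
    (a : EuclideanSpace ℝ (Fin d)) : Set (EuclideanSpace ℝ (Fin d)) :=
  {x | {p | p ∈ A \ {a} ∧ dist x p < dist x a}.encard = ((k - 1 : ℕ) : ℕ∞) ∧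
       ∀ p ∈ A \ {a}, dist x p ≠ dist x a}

/-- The chambers of the `k`-th Brillouin zone of `a` in `A`. -/
def chambers (d k : ℕ) (A : Set (EuclideanSpace ℝ (Fin d)))
    (a : EuclideanSpace ℝ (Fin d)) : Set (Set (EuclideanSpace ℝ (Fin d))) :=
  {C | ∃ x ∈ chamberRegion d k A a, C = connectedComponentIn (chamberRegion d k A a) x}

/-- `ν_d`, the volume of the unit ball in `ℝ^d`. -/
def unitBallVol (d : ℕ) : ℝ := Real.pi ^ ((d : ℝ) / 2) / Real.Gamma ((d : ℝ) / 2 + 1)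


namespace BZaux

/-- positive lower bound over a finite set -/
lemma pos_lb {X : Type*} {S : Set X} (hS : S.Finite) (f : X → ℝ) (hf : ∀ p ∈ S, 0 < f p) :
    ∃ δ : ℝ, 0 < δ ∧ ∀ p ∈ S, δ ≤ f p := by
  rcases S.eq_empty_or_nonempty with h | h
  · exact ⟨1, one_pos, by simp [h]⟩
  · obtain ⟨b, hb, hmin⟩ := S.exists_min_image f hS h
    exact ⟨f b, hf b hb, fun p hp => hmin p hp⟩

/-- upper bound over a finite set -/
lemma exists_ub {X : Type*} {S : Set X} (hS : S.Finite) (f : X → ℝ) :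
    ∃ r : ℝ, 0 < r ∧ ∀ p ∈ S, f p ≤ r := by
  rcases S.eq_empty_or_nonempty with h | h
  · exact ⟨1, one_pos, by simp [h]⟩
  · obtain ⟨b, hb, hmax⟩ := S.exists_max_image f hS h
    exact ⟨max (f b) 1, lt_max_of_lt_right one_pos,
      fun p hp => le_max_of_le_left (hmax p hp)⟩

/-- strict upper bound below `c` over a finite set -/
lemma exists_ub_lt {X : Type*} {S : Set X} (hS : S.Finite) (f : X → ℝ) {c : ℝ}
    (hc0 : 0 < c) (hc : ∀ p ∈ S, f p < c) :
    ∃ r : ℝ, 0 < r ∧ r < c ∧ ∀ p ∈ S, f p ≤ r := by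
  rcases S.eq_empty_or_nonempty with h | h
  · exact ⟨c / 2, by linarith, by linarith, by simp [h]⟩
  · obtain ⟨b, hb, hmax⟩ := S.exists_max_image f hS h
    refine ⟨max (f b) (c / 2), lt_max_of_lt_right (by linarith), ?_, 
      fun p hp => le_max_of_le_left (hmax p hp)⟩
    exact max_lt (hc b hb) (by linarith)


variable {d : ℕ}

/-- Points of `A` other than 0 within distance `dist x 0` of `x`. -/
def Sle (A : Set (EuclideanSpace ℝ (Fin d))) (x : EuclideanSpace ℝ (Fin d)) :
    Set (EuclideanSpace ℝ (Fin d)) := {p | p ∈ A \ {0} ∧ dist x p ≤ dist x 0}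

def Slt (A : Set (EuclideanSpace ℝ (Fin d))) (x : EuclideanSpace ℝ (Fin d)) :
    Set (EuclideanSpace ℝ (Fin d)) := {p | p ∈ A \ {0} ∧ dist x p < dist x 0}

lemma dist_smul_zero (u : EuclideanSpace ℝ (Fin d)) (hu : ‖u‖ = 1) {r : ℝ} (hr : 0 ≤ r) :
    dist (r • u) 0 = r := by
  rw [dist_zero_right, norm_smul, hu, mul_one, Real.norm_eq_abs, abs_of_nonneg hr]

lemma norm_sub_sq_smul (u p : EuclideanSpace ℝ (Fin d)) (hu : ‖u‖ = 1) (r : ℝ) :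
    ‖r • u - p‖ ^ 2 = r ^ 2 - 2 * (r * (inner ℝ u p : ℝ)) + ‖p‖ ^ 2 := by
  rw [norm_sub_sq_real, real_inner_smul_left, norm_smul, hu, mul_one, Real.norm_eq_abs,
    sq_abs]

lemma dist_le_iff (u p : EuclideanSpace ℝ (Fin d)) (hu : ‖u‖ = 1) {r : ℝ} (hr : 0 ≤ r) :
    dist (r • u) p ≤ dist (r • u) 0 ↔ ‖p‖ ^ 2 ≤ 2 * r * (inner ℝ u p : ℝ) := by
  rw [dist_smul_zero u hu hr, dist_eq_norm,
    ← pow_le_pow_iff_left₀ (norm_nonneg _) hr two_ne_zero, norm_sub_sq_smul u p hu r]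
  constructor <;> intro h <;> nlinarith

lemma dist_lt_iff (u p : EuclideanSpace ℝ (Fin d)) (hu : ‖u‖ = 1) {r : ℝ} (hr : 0 ≤ r) :
    dist (r • u) p < dist (r • u) 0 ↔ ‖p‖ ^ 2 < 2 * r * (inner ℝ u p : ℝ) := by
  rw [dist_smul_zero u hu hr, dist_eq_norm,
    ← pow_lt_pow_iff_left₀ (norm_nonneg _) hr two_ne_zero, norm_sub_sq_smul u p hu r]
  constructor <;> intro h <;> nlinarith

lemma mem_Sle' {A : Set (EuclideanSpace ℝ (Fin d))} {u p : EuclideanSpace ℝ (Fin d)}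
    (hu : ‖u‖ = 1) {r : ℝ} (hr : 0 ≤ r) :
    p ∈ Sle A (r • u) ↔ (p ∈ A ∧ p ≠ 0) ∧ ‖p‖ ^ 2 ≤ 2 * r * (inner ℝ u p : ℝ) := by
  unfold Sle
  simp only [Set.mem_setOf_eq, Set.mem_diff, Set.mem_singleton_iff, dist_le_iff u p hu hr]

lemma mem_Slt' {A : Set (EuclideanSpace ℝ (Fin d))} {u p : EuclideanSpace ℝ (Fin d)}
    (hu : ‖u‖ = 1) {r : ℝ} (hr : 0 ≤ r) :
    p ∈ Slt A (r • u) ↔ (p ∈ A ∧ p ≠ 0) ∧ ‖p‖ ^ 2 < 2 * r * (inner ℝ u p : ℝ) := by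
  unfold Slt
  simp only [Set.mem_setOf_eq, Set.mem_diff, Set.mem_singleton_iff, dist_lt_iff u p hu hr]

/-- inner positivity from membership -/
lemma inner_pos_of_le {u p : EuclideanSpace ℝ (Fin d)} (hp : p ≠ 0) {r : ℝ} (hr : 0 < r)
    (h : ‖p‖ ^ 2 ≤ 2 * r * (inner ℝ u p : ℝ)) : 0 < (inner ℝ u p : ℝ) := by
  have hp2 : 0 < ‖p‖ ^ 2 := pow_pos (norm_pos_iff.mpr hp) 2
  nlinarith

lemma Sle_mono' {A : Set (EuclideanSpace ℝ (Fin d))} {u : EuclideanSpace ℝ (Fin d)}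
    (hu : ‖u‖ = 1) {r s : ℝ} (hr : 0 < r) (hrs : r ≤ s) : Sle A (r • u) ⊆ Sle A (s • u) := by
  intro p hp
  rw [mem_Sle' hu hr.le] at hp
  rw [mem_Sle' hu (hr.trans_le hrs).le]
  refine ⟨hp.1, ?_⟩
  have hip := inner_pos_of_le hp.1.2 hr hp.2
  nlinarith [hp.2]

lemma Slt_mono' {A : Set (EuclideanSpace ℝ (Fin d))} {u : EuclideanSpace ℝ (Fin d)}
    (hu : ‖u‖ = 1) {r s : ℝ} (hr : 0 < r) (hrs : r ≤ s) : Slt A (r • u) ⊆ Slt A (s • u) := by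
  intro p hp
  rw [mem_Slt' hu hr.le] at hp
  rw [mem_Slt' hu (hr.trans_le hrs).le]
  refine ⟨hp.1, ?_⟩
  have hip := inner_pos_of_le hp.1.2 hr hp.2.le
  nlinarith [hp.2]

lemma Sle_norm_le' {A : Set (EuclideanSpace ℝ (Fin d))} {u p : EuclideanSpace ℝ (Fin d)}
    (hu : ‖u‖ = 1) {r : ℝ} (hr : 0 ≤ r) (hp : p ∈ Sle A (r • u)) : ‖p‖ ≤ 2 * r := by
  have h1 : dist (r • u) p ≤ r := by
    have := hp.2; rwa [dist_smul_zero u hu hr] at this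
  have h2 : ‖p‖ = dist p 0 := by rw [dist_zero_right]
  have h3 : dist p 0 ≤ dist p (r • u) + dist (r • u) 0 := dist_triangle _ _ _
  rw [dist_comm p (r • u)] at h3
  rw [dist_smul_zero u hu hr] at h3
  linarith


def Ru (A : Set (EuclideanSpace ℝ (Fin d))) (m : ℕ) (u : EuclideanSpace ℝ (Fin d)) :
    Set ℝ := {r | 0 < r ∧ (m : ℕ∞) ≤ (Sle A (r • u)).encard}

noncomputable def alph (A : Set (EuclideanSpace ℝ (Fin d))) (m : ℕ)
    (u : EuclideanSpace ℝ (Fin d)) : ℝ := sInf (Ru A m u)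


/-- a positive lower bound on norms of nonzero points of `A` -/
lemma norm_lb {A : Set (EuclideanSpace ℝ (Fin d))}
    (hloc : ∀ s : Set (EuclideanSpace ℝ (Fin d)), Bornology.IsBounded s → (A ∩ s).Finite) :
    ∃ δ : ℝ, 0 < δ ∧ ∀ p ∈ A, p ≠ 0 → δ ≤ ‖p‖ := by
  have hT : ((A ∩ closedBall 0 1) \ {0}).Finite :=
    ((hloc _ isBounded_closedBall).subset diff_subset)
  obtain ⟨δ', hδ', hlb⟩ := pos_lb hT (fun p => ‖p‖) (by
    rintro p ⟨-, hp0⟩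
    exact norm_pos_iff.mpr hp0)
  refine ⟨min δ' 1, lt_min hδ' one_pos, fun p hpA hp0 => ?_⟩
  rcases le_or_gt ‖p‖ 1 with h1 | h1
  · exact le_trans (min_le_left _ _) (hlb p ⟨⟨hpA, by rwa [mem_closedBall_zero_iff]⟩, hp0⟩)
  · exact le_trans (min_le_right _ _) h1.le

lemma Ru_nonempty {A : Set (EuclideanSpace ℝ (Fin d))}
    (hcd : ∀ (v : EuclideanSpace ℝ (Fin d)) (c : ℝ), v ≠ 0 →
      (A ∩ {x | (inner ℝ v x : ℝ) ≤ c}).Infinite)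
    {u : EuclideanSpace ℝ (Fin d)} (hu : ‖u‖ = 1) (m : ℕ) :
    (Ru A m u).Nonempty := by
  have hune : u ≠ 0 := fun h => by simp [h] at hu
  have hinf := hcd (-u) (-1) (neg_ne_zero.mpr hune)
  obtain ⟨W, hWsub, hWcard⟩ := hinf.exists_subset_card_eq m
  have hWinner : ∀ p ∈ (W : Set (EuclideanSpace ℝ (Fin d))), 1 ≤ (inner ℝ u p : ℝ) := by
    intro p hp
    have := (hWsub hp).2
    simp only [mem_setOf_eq, inner_neg_left] at this
    linarith
  have hWne : ∀ p ∈ (W : Set (EuclideanSpace ℝ (Fin d))), p ≠ 0 := by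
    intro p hp h0
    have := hWinner p hp
    rw [h0, inner_zero_right] at this
    norm_num at this
  obtain ⟨r, hr0, hub⟩ := exists_ub W.finite_toSet (fun p => ‖p‖ ^ 2 / 2)
  refine ⟨r, hr0, ?_⟩
  have hsub : (W : Set (EuclideanSpace ℝ (Fin d))) ⊆ Sle A (r • u) := by
    intro p hp
    rw [mem_Sle' hu hr0.le]
    refine ⟨⟨(hWsub hp).1, hWne p hp⟩, ?_⟩
    have h1 := hWinner p hp
    have h2 := hub p hp
    nlinarith
  calc ((m : ℕ∞)) = (W : Set (EuclideanSpace ℝ (Fin d))).encard := by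
        rw [encard_coe_eq_coe_finsetCard, hWcard]
    _ ≤ _ := encard_mono hsub

lemma Ru_lb {A : Set (EuclideanSpace ℝ (Fin d))}
    (hloc : ∀ s : Set (EuclideanSpace ℝ (Fin d)), Bornology.IsBounded s → (A ∩ s).Finite)
    {u : EuclideanSpace ℝ (Fin d)} (hu : ‖u‖ = 1) {m : ℕ} (hm : 1 ≤ m) :
    ∃ δ : ℝ, 0 < δ ∧ ∀ r ∈ Ru A m u, δ ≤ r := by
  obtain ⟨δ, hδ0, hδ⟩ := norm_lb hloc
  refine ⟨δ / 2, by linarith, ?_⟩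
  rintro r ⟨hr0, hrcard⟩
  have h1 : (1 : ℕ∞) ≤ (Sle A (r • u)).encard :=
    le_trans (by exact_mod_cast hm) hrcard
  obtain ⟨p, hp⟩ := one_le_encard_iff_nonempty.mp h1
  have hmem := (mem_Sle' hu hr0.le).mp hp
  have hnorm := hδ p hmem.1.1 hmem.1.2
  have hCS : (inner ℝ u p : ℝ) ≤ ‖p‖ := by
    have := real_inner_le_norm u p
    rwa [hu, one_mul] at this
  nlinarith [hmem.2, norm_nonneg p]


section Main
variable {A : Set (EuclideanSpace ℝ (Fin d))}
  (hloc : ∀ s : Set (EuclideanSpace ℝ (Fin d)), Bornology.IsBounded s → (A ∩ s).Finite)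
  (hcd : ∀ (v : EuclideanSpace ℝ (Fin d)) (c : ℝ), v ≠ 0 →
      (A ∩ {x | (inner ℝ v x : ℝ) ≤ c}).Infinite)
  {m : ℕ} (hm : 1 ≤ m)

include hloc hcd hm

lemma alph_pos' {u : EuclideanSpace ℝ (Fin d)} (hu : ‖u‖ = 1) : 0 < alph A m u := by
  obtain ⟨δ, hδ0, hδ⟩ := Ru_lb hloc hu hm
  exact lt_of_lt_of_le hδ0 (le_csInf (Ru_nonempty hcd hu m) hδ)

lemma alph_le' {u : EuclideanSpace ℝ (Fin d)} (hu : ‖u‖ = 1) {r : ℝ} (hr : r ∈ Ru A m u) :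
    alph A m u ≤ r := by
  obtain ⟨δ, hδ0, hδ⟩ := Ru_lb hloc hu hm
  exact csInf_le ⟨δ, hδ⟩ hr

lemma alph_mem' {u : EuclideanSpace ℝ (Fin d)} (hu : ‖u‖ = 1) : alph A m u ∈ Ru A m u := by
  have hne := Ru_nonempty hcd hu m
  have hα0 : 0 < alph A m u := alph_pos' hloc hcd hm hu
  set α := alph A m u with hαdef
  refine ⟨hα0, ?_⟩
  by_contra hcard
  have hT : ((A ∩ closedBall 0 (2 * α + 2)) \ {0}).Finite :=
    (hloc _ isBounded_closedBall).subset diff_subset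
  set U := ((A ∩ closedBall 0 (2 * α + 2)) \ {0}) \ Sle A (α • u) with hUdef
  set U' := {p ∈ U | 0 < (inner ℝ u p : ℝ)} with hU'def
  have hU'fin : U'.Finite := (hT.subset diff_subset).subset (sep_subset _ _)
  obtain ⟨γ, hγ0, hγ⟩ := pos_lb hU'fin
      (fun p => ‖p‖ ^ 2 / (2 * (inner ℝ u p : ℝ)) - α) (by
    rintro p ⟨hpU, hip⟩
    have hpA : p ∈ A := hpU.1.1.1
    have hp0 : p ≠ 0 := hpU.1.2
    have hnot : ¬ (‖p‖ ^ 2 ≤ 2 * α * (inner ℝ u p : ℝ)) := fun hle =>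
      hpU.2 ((mem_Sle' hu hα0.le).mpr ⟨⟨hpA, hp0⟩, hle⟩)
    push_neg at hnot
    have h2ip : (0:ℝ) < 2 * (inner ℝ u p : ℝ) := by linarith
    have := (lt_div_iff₀ h2ip).mpr (by nlinarith : α * (2 * (inner ℝ u p : ℝ)) < ‖p‖ ^ 2)
    linarith)
  set s' := α + min γ 1 / 2 with hs'def
  have hmin0 : 0 < min γ 1 := lt_min hγ0 one_pos
  have hαs' : α < s' := by simp only [hs'def]; linarith
  have hs'0 : 0 < s' := hα0.trans hαs'
  have hs'le : s' ≤ α + 1 := by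
    have := min_le_right γ 1; simp only [hs'def]; linarith
  have hsub : Sle A (s' • u) ⊆ Sle A (α • u) := by
    intro p hp
    have hmem := (mem_Sle' hu hs'0.le).mp hp
    have hnorm : ‖p‖ ≤ 2 * s' := Sle_norm_le' hu hs'0.le hp
    by_contra hpnot
    have hpU : p ∈ U := ⟨⟨⟨hmem.1.1, by rw [mem_closedBall_zero_iff]; linarith⟩, hmem.1.2⟩, hpnot⟩
    rcases le_or_gt (inner ℝ u p : ℝ) 0 with hip | hip
    · have hp2 : 0 < ‖p‖ ^ 2 := pow_pos (norm_pos_iff.mpr hmem.1.2) 2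
      nlinarith [hmem.2]
    · have hγp := hγ p ⟨hpU, hip⟩
      have hlt : s' < ‖p‖ ^ 2 / (2 * (inner ℝ u p : ℝ)) := by
        have h1 := min_le_left γ 1
        simp only [hs'def]; linarith
      have := (lt_div_iff₀ (by linarith : (0:ℝ) < 2 * (inner ℝ u p : ℝ))).mp hlt
      nlinarith [hmem.2]
  have hfin : s' ≤ α := by
    refine le_csInf hne (fun r hr => ?_)
    by_contra hrs
    push_neg at hrs
    have hmono : Sle A (r • u) ⊆ Sle A (s' • u) := Sle_mono' hu hr.1 hrs.le
    exact hcard (le_trans hr.2 (encard_mono (hmono.trans hsub)))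
  linarith

lemma Slt_card_le' {u : EuclideanSpace ℝ (Fin d)} (hu : ‖u‖ = 1) :
    (Slt A (alph A m u • u)).encard ≤ (m : ℕ∞) := by
  have hα0 : 0 < alph A m u := alph_pos' hloc hcd hm hu
  set α := alph A m u with hαdef
  by_contra hcard
  push_neg at hcard
  obtain ⟨W, hWsub, hWenc⟩ := exists_subset_encard_eq hcard.le
  have hWfin : W.Finite := finite_of_encard_eq_coe hWenc
  obtain ⟨r, hr0, hrα, hub⟩ := exists_ub_lt hWfin
      (fun p => ‖p‖ ^ 2 / (2 * (inner ℝ u p : ℝ))) hα0 (by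
    intro p hp
    have hmem := (mem_Slt' hu hα0.le).mp (hWsub hp)
    have hp2 : 0 < ‖p‖ ^ 2 := pow_pos (norm_pos_iff.mpr hmem.1.2) 2
    have hip : 0 < (inner ℝ u p : ℝ) := by nlinarith [hmem.2]
    exact (div_lt_iff₀ (by linarith)).mpr (by nlinarith [hmem.2]))
  have hsub : W ⊆ Sle A (r • u) := by
    intro p hp
    have hmem := (mem_Slt' hu hα0.le).mp (hWsub hp)
    have hp2 : 0 < ‖p‖ ^ 2 := pow_pos (norm_pos_iff.mpr hmem.1.2) 2
    have hip : 0 < (inner ℝ u p : ℝ) := by nlinarith [hmem.2]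
    rw [mem_Sle' hu hr0.le]
    refine ⟨hmem.1, ?_⟩
    have := (div_le_iff₀ (by linarith : (0:ℝ) < 2 * (inner ℝ u p : ℝ))).mp (hub p hp)
    nlinarith
  have hrRu : r ∈ Ru A m u := ⟨hr0, by rw [← hWenc]; exact encard_mono hsub⟩
  exact absurd (alph_le' hloc hcd hm hu hrRu) (by linarith)

end Main

section Main2
variable {A : Set (EuclideanSpace ℝ (Fin d))}
  (hloc : ∀ s : Set (EuclideanSpace ℝ (Fin d)), Bornology.IsBounded s → (A ∩ s).Finite)
  (hcd : ∀ (v : EuclideanSpace ℝ (Fin d)) (c : ℝ), v ≠ 0 →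
      (A ∩ {x | (inner ℝ v x : ℝ) ≤ c}).Infinite)
  {m : ℕ} (hm : 1 ≤ m)

lemma inner_perturb {u u' p : EuclideanSpace ℝ (Fin d)} :
    (inner ℝ u p : ℝ) - ‖u' - u‖ * ‖p‖ ≤ (inner ℝ u' p : ℝ) := by
  have h := real_inner_le_norm (u - u') p
  rw [inner_sub_left, norm_sub_rev] at h
  linarith

lemma frac_lt {a γ : ℝ} (ha : 0 ≤ a) (hγ : 0 < γ) : a * (γ / (a + 1)) < γ := by
  rw [← mul_div_assoc, div_lt_iff₀ (by linarith)]
  nlinarith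

include hloc hcd hm

lemma alph_usc {u : EuclideanSpace ℝ (Fin d)} (hu : ‖u‖ = 1) {ε : ℝ} (hε : 0 < ε) :
    ∃ δ : ℝ, 0 < δ ∧ ∀ u' : EuclideanSpace ℝ (Fin d), ‖u'‖ = 1 → ‖u' - u‖ < δ →
      alph A m u' ≤ alph A m u + ε := by
  have hα0 : 0 < alph A m u := alph_pos' hloc hcd hm hu
  set α := alph A m u with hαdef
  have hαRu := alph_mem' hloc hcd hm hu
  set s := α + ε with hsdef
  have hs0 : 0 < s := by linarith
  have hWfin : (Sle A (α • u)).Finite := by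
    refine (hloc (closedBall 0 (2 * α)) isBounded_closedBall).subset ?_
    intro p hp
    exact ⟨((mem_Sle' hu hα0.le).mp hp).1.1,
      by rw [mem_closedBall_zero_iff]; exact Sle_norm_le' hu hα0.le hp⟩
  obtain ⟨γ, hγ0, hγ⟩ := pos_lb hWfin (fun p => 2 * s * (inner ℝ u p : ℝ) - ‖p‖ ^ 2) (by
    intro p hp
    show 0 < 2 * s * (inner ℝ u p : ℝ) - ‖p‖ ^ 2
    have hmem := (mem_Sle' hu hα0.le).mp hp
    have hp2 : 0 < ‖p‖ ^ 2 := pow_pos (norm_pos_iff.mpr hmem.1.2) 2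
    have hip : 0 < (inner ℝ u p : ℝ) := by nlinarith [hmem.2]
    have hse : s = α + ε := hsdef
    nlinarith [hmem.2, mul_pos hε hip])
  refine ⟨γ / (4 * s * α + 1), by positivity, fun u' hu' hdist => ?_⟩
  have hδle : ‖u' - u‖ ≤ γ / (4 * s * α + 1) := hdist.le
  have hsub : Sle A (α • u) ⊆ Sle A (s • u') := by
    intro p hp
    have hmem := (mem_Sle' hu hα0.le).mp hp
    have hγp := hγ p hp
    have hnorm : ‖p‖ ≤ 2 * α := Sle_norm_le' hu hα0.le hp
    rw [mem_Sle' hu' hs0.le]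
    refine ⟨hmem.1, ?_⟩
    have hpert : (inner ℝ u p : ℝ) - ‖u' - u‖ * ‖p‖ ≤ (inner ℝ u' p : ℝ) :=
      inner_perturb
    have h2 : ‖u' - u‖ * ‖p‖ ≤ (γ / (4 * s * α + 1)) * (2 * α) :=
      mul_le_mul hδle hnorm (norm_nonneg p) (by positivity)
    have h3 : 4 * s * α * (γ / (4 * s * α + 1)) < γ := frac_lt (by positivity) hγ0
    have hq1 : 2 * s * ((inner ℝ u p : ℝ) - ‖u' - u‖ * ‖p‖) ≤ 2 * s * (inner ℝ u' p : ℝ) :=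
      mul_le_mul_of_nonneg_left hpert (by linarith)
    have hq2 : 2 * s * (‖u' - u‖ * ‖p‖) ≤ 2 * s * (γ / (4 * s * α + 1) * (2 * α)) :=
      mul_le_mul_of_nonneg_left h2 (by linarith)
    have hq1' : 2 * s * ((inner ℝ u p : ℝ) - ‖u' - u‖ * ‖p‖)
        = 2 * s * (inner ℝ u p : ℝ) - 2 * s * (‖u' - u‖ * ‖p‖) := by ring
    have hq3 : 2 * s * (γ / (4 * s * α + 1) * (2 * α)) = 4 * s * α * (γ / (4 * s * α + 1)) := by
      ring
    clear_value s α
    linarith [hγp, hq1, hq1', hq2, hq3, h3]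
  have hsRu : s ∈ Ru A m u' := ⟨hs0, le_trans hαRu.2 (encard_mono hsub)⟩
  exact alph_le' hloc hcd hm hu' hsRu

lemma alph_lsc {u : EuclideanSpace ℝ (Fin d)} (hu : ‖u‖ = 1) {ε : ℝ} (hε : 0 < ε) :
    ∃ δ : ℝ, 0 < δ ∧ ∀ u' : EuclideanSpace ℝ (Fin d), ‖u'‖ = 1 → ‖u' - u‖ < δ →
      alph A m u - ε ≤ alph A m u' := by
  have hα0 : 0 < alph A m u := alph_pos' hloc hcd hm hu
  set α := alph A m u with hαdef
  rcases le_or_gt (α - ε) 0 with hs | hs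
  · exact ⟨1, one_pos, fun u' hu' _ => le_trans hs (alph_pos' hloc hcd hm hu').le⟩
  set s := α - ε with hsdef
  have hcard : ¬ ((m : ℕ∞) ≤ (Sle A (s • u)).encard) := fun h =>
    absurd (alph_le' hloc hcd hm hu ⟨hs, h⟩) (by simp only [hsdef]; linarith)
  have hTfin : (((A ∩ closedBall 0 (2 * s)) \ {0}) \ Sle A (s • u)).Finite :=
    ((hloc _ isBounded_closedBall).subset diff_subset).subset diff_subset
  set U := ((A ∩ closedBall 0 (2 * s)) \ {0}) \ Sle A (s • u) with hUdef
  obtain ⟨γ, hγ0, hγ⟩ := pos_lb hTfin (fun p => ‖p‖ ^ 2 - 2 * s * (inner ℝ u p : ℝ)) (by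
    rintro p ⟨⟨⟨hpA, hpball⟩, hp0⟩, hpnot⟩
    show 0 < ‖p‖ ^ 2 - 2 * s * (inner ℝ u p : ℝ)
    have hnot : ¬ (‖p‖ ^ 2 ≤ 2 * s * (inner ℝ u p : ℝ)) := fun hle =>
      hpnot ((mem_Sle' hu hs.le).mpr ⟨⟨hpA, hp0⟩, hle⟩)
    push_neg at hnot
    linarith)
  refine ⟨γ / (4 * s * s + 1), by positivity, fun u' hu' hdist => ?_⟩
  have hsub : Sle A (s • u') ⊆ Sle A (s • u) := by
    intro p hp
    have hmem := (mem_Sle' hu' hs.le).mp hp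
    have hnorm : ‖p‖ ≤ 2 * s := Sle_norm_le' hu' hs.le hp
    by_contra hpnot
    have hpU : p ∈ U := ⟨⟨⟨hmem.1.1, by rw [mem_closedBall_zero_iff]; linarith⟩, hmem.1.2⟩, hpnot⟩
    have hγp := hγ p hpU
    have hpert : (inner ℝ u' p : ℝ) - ‖u - u'‖ * ‖p‖ ≤ (inner ℝ u p : ℝ) :=
      inner_perturb
    have hrev : ‖u - u'‖ = ‖u' - u‖ := norm_sub_rev u u'
    have h2 : ‖u' - u‖ * ‖p‖ ≤ (γ / (4 * s * s + 1)) * (2 * s) :=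
      mul_le_mul hdist.le hnorm (norm_nonneg p) (by positivity)
    have h3 : 4 * s * s * (γ / (4 * s * s + 1)) < γ := frac_lt (by positivity) hγ0
    rw [hrev] at hpert
    have hq1 : 2 * s * ((inner ℝ u' p : ℝ) - ‖u' - u‖ * ‖p‖) ≤ 2 * s * (inner ℝ u p : ℝ) :=
      mul_le_mul_of_nonneg_left hpert (by linarith)
    have hq2 : 2 * s * (‖u' - u‖ * ‖p‖) ≤ 2 * s * (γ / (4 * s * s + 1) * (2 * s)) :=
      mul_le_mul_of_nonneg_left h2 (by linarith)
    have hq1' : 2 * s * ((inner ℝ u' p : ℝ) - ‖u' - u‖ * ‖p‖)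
        = 2 * s * (inner ℝ u' p : ℝ) - 2 * s * (‖u' - u‖ * ‖p‖) := by ring
    have hq3 : 2 * s * (γ / (4 * s * s + 1) * (2 * s)) = 4 * s * s * (γ / (4 * s * s + 1)) := by
      ring
    clear_value s α
    linarith [hmem.2, hγp, hq1, hq1', hq2, hq3, h3]
  have hall : ∀ r ∈ Ru A m u', s ≤ r := by
    intro r hr
    by_contra hrs
    push_neg at hrs
    have hmono : Sle A (r • u') ⊆ Sle A (s • u') := Sle_mono' hu' hr.1 hrs.le
    exact hcard (le_trans hr.2 (encard_mono (hmono.trans hsub)))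
  exact le_csInf (Ru_nonempty hcd hu' m) hall

lemma alph_cont' :
    Continuous fun u : sphere (0 : EuclideanSpace ℝ (Fin d)) 1 => alph A m u.1 := by
  rw [Metric.continuous_iff]
  intro u ε hε
  have hu : ‖(u : EuclideanSpace ℝ (Fin d))‖ = 1 := by
    have := u.2; rwa [mem_sphere_zero_iff_norm] at this
  obtain ⟨δ1, hδ1, husc⟩ := alph_usc hloc hcd hm hu (half_pos hε)
  obtain ⟨δ2, hδ2, hlsc⟩ := alph_lsc hloc hcd hm hu (half_pos hε)
  refine ⟨min δ1 δ2, lt_min hδ1 hδ2, fun u' hdist => ?_⟩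
  have hu' : ‖(u' : EuclideanSpace ℝ (Fin d))‖ = 1 := by
    have := u'.2; rwa [mem_sphere_zero_iff_norm] at this
  have hd : ‖(u' : EuclideanSpace ℝ (Fin d)) - u‖ < min δ1 δ2 := by
    rw [← dist_eq_norm]
    exact hdist
  have h1 := husc u' hu' (hd.trans_le (min_le_left _ _))
  have h2 := hlsc u' hu' (hd.trans_le (min_le_right _ _))
  rw [Real.dist_eq, abs_sub_lt_iff]
  constructor <;> linarith

end Main2

lemma Sle_zero {A : Set (EuclideanSpace ℝ (Fin d))} : Sle A 0 = ∅ := by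
  ext p
  simp only [Sle, mem_setOf_eq, mem_empty_iff_false, iff_false, not_and, dist_self]
  rintro ⟨-, hp0⟩ hd
  exact hp0 (mem_singleton_iff.mpr (dist_eq_zero.mp (le_antisymm hd dist_nonneg)).symm)

lemma mem_Ru_iff {A : Set (EuclideanSpace ℝ (Fin d))} {m : ℕ} {u : EuclideanSpace ℝ (Fin d)}
    {r : ℝ} : r ∈ Ru A m u ↔ (0 < r ∧ (m : ℕ∞) ≤ (Sle A (r • u)).encard) := Iff.rfl

attribute [irreducible] alph Ru Sle Slt

section Equiv
variable {k : ℕ} {A : Set (EuclideanSpace ℝ (Fin d))} {m : ℕ}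

lemma norm_inv_smul {x : EuclideanSpace ℝ (Fin d)} (hx : x ≠ 0) : ‖‖x‖⁻¹ • x‖ = 1 := by
  rw [norm_smul, norm_inv, norm_norm, inv_mul_cancel₀ (norm_ne_zero_iff.mpr hx)]

set_option maxHeartbeats 1000000 in
noncomputable def Fmap
    (h0 : ∀ x : ↥(brillouinZone d k A 0), (x : EuclideanSpace ℝ (Fin d)) ≠ 0) :
    C(↥(brillouinZone d k A 0), ↥(sphere (0 : EuclideanSpace ℝ (Fin d)) 1)) where
  toFun x := ⟨‖(x : EuclideanSpace ℝ (Fin d))‖⁻¹ • (x : EuclideanSpace ℝ (Fin d)),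
    by rw [mem_sphere_zero_iff_norm]; exact norm_inv_smul (h0 x)⟩
  continuous_toFun := by
    refine Continuous.subtype_mk ?_ _
    exact ((continuous_subtype_val.norm).inv₀
      (fun x => norm_ne_zero_iff.mpr (h0 x))).smul continuous_subtype_val

set_option maxHeartbeats 1000000 in
noncomputable def Gmap (m : ℕ)
    (hcont : Continuous fun v : ↥(sphere (0 : EuclideanSpace ℝ (Fin d)) 1) =>
      alph A m (v : EuclideanSpace ℝ (Fin d)))
    (hmem : ∀ v : ↥(sphere (0 : EuclideanSpace ℝ (Fin d)) 1),
      alph A m (v : EuclideanSpace ℝ (Fin d)) • (v : EuclideanSpace ℝ (Fin d))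
        ∈ brillouinZone d k A 0) :
    C(↥(sphere (0 : EuclideanSpace ℝ (Fin d)) 1), ↥(brillouinZone d k A 0)) where
  toFun v := ⟨alph A m (v : EuclideanSpace ℝ (Fin d)) • (v : EuclideanSpace ℝ (Fin d)), hmem v⟩
  continuous_toFun := by
    refine Continuous.subtype_mk ?_ _
    exact hcont.smul continuous_subtype_val

set_option maxHeartbeats 1000000 in
lemma Fmap_Gmap
    (h0 : ∀ x : ↥(brillouinZone d k A 0), (x : EuclideanSpace ℝ (Fin d)) ≠ 0)
    (hcont : Continuous fun v : ↥(sphere (0 : EuclideanSpace ℝ (Fin d)) 1) =>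
      alph A m (v : EuclideanSpace ℝ (Fin d)))
    (hmem : ∀ v : ↥(sphere (0 : EuclideanSpace ℝ (Fin d)) 1),
      alph A m (v : EuclideanSpace ℝ (Fin d)) • (v : EuclideanSpace ℝ (Fin d))
        ∈ brillouinZone d k A 0)
    (hpos : ∀ v : ↥(sphere (0 : EuclideanSpace ℝ (Fin d)) 1),
      0 < alph A m (v : EuclideanSpace ℝ (Fin d))) :
    (Fmap h0).comp (Gmap m hcont hmem) = ContinuousMap.id _ := by
  apply ContinuousMap.ext
  intro v
  apply Subtype.ext
  have hv : ‖(v : EuclideanSpace ℝ (Fin d))‖ = 1 := by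
    have := v.2; rwa [mem_sphere_zero_iff_norm] at this
  show ‖alph A m (v : EuclideanSpace ℝ (Fin d)) • (v : EuclideanSpace ℝ (Fin d))‖⁻¹ •
      (alph A m (v : EuclideanSpace ℝ (Fin d)) • (v : EuclideanSpace ℝ (Fin d)))
      = (v : EuclideanSpace ℝ (Fin d))
  rw [norm_smul, hv, mul_one, Real.norm_eq_abs, abs_of_pos (hpos v)]
  exact inv_smul_smul₀ (hpos v).ne' _

set_option maxHeartbeats 1000000 in
noncomputable def Hmap
    (h0 : ∀ x : ↥(brillouinZone d k A 0), (x : EuclideanSpace ℝ (Fin d)) ≠ 0)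
    (hcont : Continuous fun v : ↥(sphere (0 : EuclideanSpace ℝ (Fin d)) 1) =>
      alph A m (v : EuclideanSpace ℝ (Fin d)))
    (hmem : ∀ v : ↥(sphere (0 : EuclideanSpace ℝ (Fin d)) 1),
      alph A m (v : EuclideanSpace ℝ (Fin d)) • (v : EuclideanSpace ℝ (Fin d))
        ∈ brillouinZone d k A 0)
    (hle : ∀ x : ↥(brillouinZone d k A 0),
      alph A m (‖(x : EuclideanSpace ℝ (Fin d))‖⁻¹ • (x : EuclideanSpace ℝ (Fin d)))
        ≤ ‖(x : EuclideanSpace ℝ (Fin d))‖)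
    (hseg : ∀ x : ↥(brillouinZone d k A 0), ∀ t : ℝ,
      alph A m (‖(x : EuclideanSpace ℝ (Fin d))‖⁻¹ • (x : EuclideanSpace ℝ (Fin d))) ≤ t →
      t ≤ ‖(x : EuclideanSpace ℝ (Fin d))‖ →
      t • (‖(x : EuclideanSpace ℝ (Fin d))‖⁻¹ • (x : EuclideanSpace ℝ (Fin d)))
        ∈ brillouinZone d k A 0) :
    ContinuousMap.Homotopy ((Gmap m hcont hmem).comp (Fmap h0))
      (ContinuousMap.id ↥(brillouinZone d k A 0)) where
  toFun q := ⟨((1 - (q.1 : ℝ)) *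
      alph A m (‖(q.2 : EuclideanSpace ℝ (Fin d))‖⁻¹ • (q.2 : EuclideanSpace ℝ (Fin d)))
      + (q.1 : ℝ) * ‖(q.2 : EuclideanSpace ℝ (Fin d))‖) •
      (‖(q.2 : EuclideanSpace ℝ (Fin d))‖⁻¹ • (q.2 : EuclideanSpace ℝ (Fin d))), by
    have hs0 : (0:ℝ) ≤ (q.1 : ℝ) := q.1.2.1
    have hs1 : (q.1 : ℝ) ≤ 1 := q.1.2.2
    have hle' := hle q.2
    refine hseg q.2 _ ?_ ?_
    · nlinarith
    · nlinarith⟩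
  continuous_toFun := by
    refine Continuous.subtype_mk ?_ _
    have hcI : Continuous fun q : unitInterval × ↥(brillouinZone d k A 0) => (q.1 : ℝ) :=
      continuous_subtype_val.comp continuous_fst
    have hcN : Continuous fun q : unitInterval × ↥(brillouinZone d k A 0) =>
        ‖(q.2 : EuclideanSpace ℝ (Fin d))‖ :=
      (continuous_subtype_val.comp continuous_snd).norm
    have hcU : Continuous fun q : unitInterval × ↥(brillouinZone d k A 0) =>
        (‖(q.2 : EuclideanSpace ℝ (Fin d))‖⁻¹ • (q.2 : EuclideanSpace ℝ (Fin d))) :=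
      ((Fmap h0).continuous.comp continuous_snd).subtype_val
    have hcA : Continuous fun q : unitInterval × ↥(brillouinZone d k A 0) =>
        alph A m (‖(q.2 : EuclideanSpace ℝ (Fin d))‖⁻¹ • (q.2 : EuclideanSpace ℝ (Fin d))) :=
      hcont.comp ((Fmap h0).continuous.comp continuous_snd)
    exact (((continuous_const.sub hcI).mul hcA).add (hcI.mul hcN)).smul hcU
  map_zero_left x := by
    apply Subtype.ext
    show ((1 - ((0 : unitInterval) : ℝ)) * _ + ((0 : unitInterval) : ℝ) * _) • _ = _
    norm_num
    rfl
  map_one_left x := by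
    apply Subtype.ext
    show ((1 - ((1 : unitInterval) : ℝ)) * _ + ((1 : unitInterval) : ℝ) * _) • _ = _
    norm_num
    exact smul_inv_smul₀ (norm_ne_zero_iff.mpr (h0 x)) _

end Equiv

end BZaux

open BZaux in
set_option maxHeartbeats 1000000 in
/-- For a locally finite, coarsely dense `A ⊆ ℝ^d` with `0 ∈ A` and `k ≥ 2`,
the `k`-th Brillouin zone of `0` is homotopy equivalent to the sphere `S^{d-1}`. -/
theorem brillouinZone_homotopyEquiv_sphere (d : ℕ) (hd : 1 ≤ d)
    (A : Set (EuclideanSpace ℝ (Fin d))) (hA0 : (0 : EuclideanSpace ℝ (Fin d)) ∈ A)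
    (hloc : ∀ s : Set (EuclideanSpace ℝ (Fin d)), Bornology.IsBounded s → (A ∩ s).Finite)
    (hcd : ∀ (v : EuclideanSpace ℝ (Fin d)) (c : ℝ), v ≠ 0 →
      (A ∩ {x | (inner ℝ v x : ℝ) ≤ c}).Infinite)
    (k : ℕ) (hk : 2 ≤ k) :
    Nonempty (ContinuousMap.HomotopyEquiv (brillouinZone d k A 0)
      (Metric.sphere (0 : EuclideanSpace ℝ (Fin d)) 1)) := by
  classical
  have hm : 1 ≤ k - 1 := by omega
  have hBz : ∀ x : EuclideanSpace ℝ (Fin d), x ∈ brillouinZone d k A 0 ↔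
      ((Slt A x).encard ≤ ((k - 1 : ℕ) : ℕ∞) ∧ ((k - 1 : ℕ) : ℕ∞) ≤ (Sle A x).encard) :=
    fun x => by simp only [brillouinZone, Slt, Sle, Set.mem_setOf_eq]
  have hsphu : ∀ v : ↥(sphere (0 : EuclideanSpace ℝ (Fin d)) 1),
      ‖(v : EuclideanSpace ℝ (Fin d))‖ = 1 := by
    intro v
    have := v.2
    rwa [mem_sphere_zero_iff_norm] at this
  -- nonvanishing on the zone
  have h0 : ∀ x : ↥(brillouinZone d k A 0), (x : EuclideanSpace ℝ (Fin d)) ≠ 0 := by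
    rintro ⟨x, hx⟩ h0'
    have h2 := ((hBz x).mp hx).2
    simp only at h0'
    rw [h0', Sle_zero, Set.encard_empty] at h2
    have : ((k - 1 : ℕ) : ℕ∞) = 0 := le_antisymm h2 zero_le
    simp only [Nat.cast_eq_zero] at this
    omega
  -- continuity of the radius function
  have hcont : Continuous fun v : ↥(sphere (0 : EuclideanSpace ℝ (Fin d)) 1) =>
      alph A (k - 1) (v : EuclideanSpace ℝ (Fin d)) := alph_cont' hloc hcd hm
  -- the base point of each ray lies in the zone
  have hmem : ∀ v : ↥(sphere (0 : EuclideanSpace ℝ (Fin d)) 1),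
      alph A (k - 1) (v : EuclideanSpace ℝ (Fin d)) • (v : EuclideanSpace ℝ (Fin d))
        ∈ brillouinZone d k A 0 := by
    intro v
    refine (hBz _).mpr ⟨Slt_card_le' hloc hcd hm (hsphu v), ?_⟩
    exact (mem_Ru_iff.mp (alph_mem' hloc hcd hm (hsphu v))).2
  have hpos : ∀ v : ↥(sphere (0 : EuclideanSpace ℝ (Fin d)) 1),
      0 < alph A (k - 1) (v : EuclideanSpace ℝ (Fin d)) :=
    fun v => alph_pos' hloc hcd hm (hsphu v)
  -- alph is at most the norm on the zone
  have hle : ∀ x : ↥(brillouinZone d k A 0),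
      alph A (k - 1) (‖(x : EuclideanSpace ℝ (Fin d))‖⁻¹ • (x : EuclideanSpace ℝ (Fin d)))
        ≤ ‖(x : EuclideanSpace ℝ (Fin d))‖ := by
    intro x
    have hx0 := h0 x
    have hu : ‖‖(x : EuclideanSpace ℝ (Fin d))‖⁻¹ • (x : EuclideanSpace ℝ (Fin d))‖ = 1 :=
      norm_inv_smul hx0
    refine alph_le' hloc hcd hm hu (mem_Ru_iff.mpr ⟨norm_pos_iff.mpr hx0, ?_⟩)
    rw [smul_inv_smul₀ (norm_ne_zero_iff.mpr hx0)]
    exact ((hBz _).mp x.2).2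
  -- segment property
  have hseg : ∀ x : ↥(brillouinZone d k A 0), ∀ t : ℝ,
      alph A (k - 1) (‖(x : EuclideanSpace ℝ (Fin d))‖⁻¹ • (x : EuclideanSpace ℝ (Fin d))) ≤ t →
      t ≤ ‖(x : EuclideanSpace ℝ (Fin d))‖ →
      t • (‖(x : EuclideanSpace ℝ (Fin d))‖⁻¹ • (x : EuclideanSpace ℝ (Fin d)))
        ∈ brillouinZone d k A 0 := by
    intro x t ht1 ht2
    have hx0 := h0 x
    have hu : ‖‖(x : EuclideanSpace ℝ (Fin d))‖⁻¹ • (x : EuclideanSpace ℝ (Fin d))‖ = 1 :=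
      norm_inv_smul hx0
    have hα0 : 0 < alph A (k - 1)
        (‖(x : EuclideanSpace ℝ (Fin d))‖⁻¹ • (x : EuclideanSpace ℝ (Fin d))) :=
      alph_pos' hloc hcd hm hu
    have ht0 : 0 < t := lt_of_lt_of_le hα0 ht1
    refine (hBz _).mpr ⟨?_, ?_⟩
    · refine le_trans (Set.encard_mono (Slt_mono' hu ht0 ht2)) ?_
      have := ((hBz _).mp x.2).1
      rwa [smul_inv_smul₀ (norm_ne_zero_iff.mpr hx0)]
    · refine le_trans (mem_Ru_iff.mp (alph_mem' hloc hcd hm hu)).2 ?_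
      exact Set.encard_mono (Sle_mono' hu hα0 ht1)
  exact ⟨⟨Fmap h0, Gmap (k - 1) hcont hmem, ⟨Hmap h0 hcont hmem hle hseg⟩,
    Fmap_Gmap h0 hcont hmem hpos ▸ ContinuousMap.Homotopic.refl _⟩⟩
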